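/- (Value differences under ρ-period finite dependence, equation (11).) Let Z and D be finite nonempty sets with baseline action 0 ∈ D, β ∈ ℝ, ρ ≥ 1, and let u_τ, f_τ, V_τ, v_τ, ψ_τ (τ = 0, …, ρ+1) satisfy, for all τ ≤ ρ, z, d: V_τ(z) = ψ_τ(d, z) + v_τ(z, d) and v_τ(z, d) = u_τ(z, d) + β Σ_{z'} V_{τ+1}(z') f_τ(z' | z, d). For each τ = 1, …, ρ fix weights w_τ : Z × Z × D → ℝ (depending on the initial state z and current state z' but not on the initial action) with Σ_{d'} w_τ(z, z', d') = 1, define κ_0(z' | z, d) = f_0(z' | z, d) and κ_τ(z'' | z, d) = Σ_{z'} κ_{τ−1}(z' | z, d) Σ_{d'} w_τ(z, z', d') f_τ(z'' | z', d'), and set κ̃_τ(z' | z, d) = κ_τ(z' | z, d) − κ_τ(z' | z, 0). Suppose the ρ-period dependence condition holds: Σ_{z'} [ Σ_{d'} w_ρ(z, z', d') f_ρ(z'' | z', d') ] κ̃_{ρ−1}(z' | z, d) = 0 for all z, z'' ∈ Z and d ∈ D. Then for all z, d: v_0(z, d) − v_0(z, 0) = (u_0(z, d) − u_0(z, 0))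 + Σ_{τ=1}^{ρ} β^τ Σ_{z'} [ Σ_{d'} w_τ(z, z', d') ( u_τ(z', d') + ψ_τ(d', z') ) ] κ̃_{τ−1}(z' | z, d). -/

import Mathlib

/-- The weighted `τ`-step-forward transition densities `κ_τ(z' | z, d)` built from the
period-`τ` transition kernels `f` and decision weights `w` (depending on the initial
state `z` and the current state `z'`, but not on the initial action): `κ_0 = f_0` and
`κ_τ(z'' | z, d) = Σ_{z'} κ_{τ-1}(z' | z, d) Σ_{d'} w_τ(z, z', d') f_τ(z'' | z', d')`. -/
noncomputable def kappaSW {Z D : Type*} [Fintype Z] [Fintype D]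
    (f : ℕ → Z → D → Z → ℝ) (w : ℕ → Z → Z → D → ℝ) :
    ℕ → Z → D → Z → ℝ
  | 0 => fun z d z' => f 0 z d z'
  | (τ + 1) => fun z d z'' =>
      ∑ z' : Z, kappaSW f w τ z d z' * ∑ d' : D, w (τ + 1) z z' d' * f (τ + 1) z' d' z''

/-- Value differences under ρ-period finite dependence (equation (11)): if the weighted
ρ-step-forward transition differences relative to the baseline action `d₀` vanish, the
period-0 value differences are expressed by ρ periods of weighted flow payoffs and
ψ-corrections, without the future integrated value function. -/
theorem value_differences_rho_period_finite_dependence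
    {Z D : Type*} [Fintype Z] [Fintype D] [Nonempty Z] [Nonempty D]
    (d₀ : D) (β : ℝ) (ρ : ℕ) (hρ : 1 ≤ ρ)
    (u : ℕ → Z → D → ℝ) (f : ℕ → Z → D → Z → ℝ)
    (V : ℕ → Z → ℝ) (v : ℕ → Z → D → ℝ) (ψ : ℕ → D → Z → ℝ)
    (hAM : ∀ τ ≤ ρ, ∀ (z : Z) (d : D), V τ z = ψ τ d z + v τ z d)
    (hBellman : ∀ τ ≤ ρ, ∀ (z : Z) (d : D),
      v τ z d = u τ z d + β * ∑ z' : Z, V (τ + 1) z' * f τ z d z')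
    (w : ℕ → Z → Z → D → ℝ)
    (hw : ∀ τ, 1 ≤ τ → τ ≤ ρ → ∀ (z z' : Z), ∑ d' : D, w τ z z' d' = 1)
    (hdep : ∀ (z z'' : Z) (d : D),
      ∑ z' : Z, (∑ d' : D, w ρ z z' d' * f ρ z' d' z'') *
        (kappaSW f w (ρ - 1) z d z' - kappaSW f w (ρ - 1) z d₀ z') = 0) :
    ∀ (z : Z) (d : D),
      v 0 z d - v 0 z d₀ = (u 0 z d - u 0 z d₀)
        + ∑ τ ∈ Finset.range ρ, β ^ (τ + 1) *
            ∑ z' : Z,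
              (∑ d' : D, w (τ + 1) z z' d' *
                (u (τ + 1) z' d' + ψ (τ + 1) d' z')) *
              (kappaSW f w τ z d z' - kappaSW f w τ z d₀ z') := by
  intro z d
  set A : ℕ → Z → ℝ := fun n z' => kappaSW f w n z d z' - kappaSW f w n z d₀ z' with hA
  have hκ : ∀ n (z'' : Z), A (n + 1) z'' =
      ∑ z' : Z, A n z' * ∑ d' : D, w (n + 1) z z' d' * f (n + 1) z' d' z'' := by
    intro n z''
    simp only [hA, kappaSW, ← Finset.sum_sub_distrib, sub_mul]
  have step : ∀ n, n + 1 ≤ ρ →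
      (∑ z' : Z, V (n + 1) z' * A n z')
      = (∑ z' : Z, (∑ d' : D, w (n + 1) z z' d' *
            (u (n + 1) z' d' + ψ (n + 1) d' z')) * A n z')
        + β * ∑ z'' : Z, V (n + 2) z'' * A (n + 1) z'' := by
    intro n hn
    have hV : ∀ (z' : Z) (d' : D), V (n + 1) z' =
        ψ (n + 1) d' z' + (u (n + 1) z' d' +
          β * ∑ z'' : Z, V (n + 2) z'' * f (n + 1) z' d' z'') := by
      intro z' d'
      rw [hAM (n + 1) hn z' d', hBellman (n + 1) hn z' d']
    have key : ∀ z' : Z, V (n + 1) z' * A n z'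
        = ∑ d' : D, (w (n + 1) z z' d' * (u (n + 1) z' d' + ψ (n + 1) d' z') * A n z'
            + β * ∑ z'' : Z, V (n + 2) z'' * (w (n + 1) z z' d' * f (n + 1) z' d' z'') * A n z') := by
      intro z'
      have h1 : V (n + 1) z' * A n z'
          = ∑ d' : D, w (n + 1) z z' d' * (V (n + 1) z' * A n z') := by
        rw [← Finset.sum_mul, hw (n + 1) (by omega) hn z z', one_mul]
      rw [h1]
      refine Finset.sum_congr rfl fun d' _ => ?_
      rw [hV z' d']
      have h2 : (∑ z'' : Z, V (n + 2) z'' * (w (n + 1) z z' d' * f (n + 1) z' d' z'') * A n z')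
          = (∑ z'' : Z, V (n + 2) z'' * f (n + 1) z' d' z'') * (w (n + 1) z z' d' * A n z') := by
        rw [Finset.sum_mul]
        exact Finset.sum_congr rfl fun _ _ => by ring
      rw [h2]
      ring
    calc (∑ z' : Z, V (n + 1) z' * A n z')
        = ∑ z' : Z, ∑ d' : D, (w (n + 1) z z' d' * (u (n + 1) z' d' + ψ (n + 1) d' z') * A n z'
            + β * ∑ z'' : Z, V (n + 2) z'' * (w (n + 1) z z' d' * f (n + 1) z' d' z'') * A n z') :=
          Finset.sum_congr rfl fun z' _ => key z'
      _ = (∑ z' : Z, ∑ d' : D, w (n + 1) z z' d' * (u (n + 1) z' d' + ψ (n + 1) d' z') * A n z')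
          + β * ∑ z' : Z, ∑ d' : D, ∑ z'' : Z,
              V (n + 2) z'' * (w (n + 1) z z' d' * f (n + 1) z' d' z'') * A n z' := by
          simp [Finset.sum_add_distrib, Finset.mul_sum]
      _ = (∑ z' : Z, (∑ d' : D, w (n + 1) z z' d' *
            (u (n + 1) z' d' + ψ (n + 1) d' z')) * A n z')
          + β * ∑ z'' : Z, V (n + 2) z'' * A (n + 1) z'' := by
          congr 1
          · exact Finset.sum_congr rfl fun z' _ => by rw [Finset.sum_mul]
          congr 1
          have h3 : (∑ z'' : Z, V (n + 2) z'' * A (n + 1) z'')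
              = ∑ z' : Z, ∑ d' : D, ∑ z'' : Z,
                  V (n + 2) z'' * (w (n + 1) z z' d' * f (n + 1) z' d' z'') * A n z' := by
            simp only [hκ n, Finset.mul_sum]
            rw [Finset.sum_comm]
            refine Finset.sum_congr rfl fun z' _ => ?_
            rw [Finset.sum_comm]
            refine Finset.sum_congr rfl fun d' _ => ?_
            exact Finset.sum_congr rfl fun z'' _ => by ring
          exact h3.symm
  have main : ∀ n ≤ ρ, v 0 z d - v 0 z d₀ = (u 0 z d - u 0 z d₀)
      + (∑ τ ∈ Finset.range n, β ^ (τ + 1) *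
          ∑ z' : Z, (∑ d' : D, w (τ + 1) z z' d' *
            (u (τ + 1) z' d' + ψ (τ + 1) d' z')) * A τ z')
      + β ^ (n + 1) * ∑ z' : Z, V (n + 1) z' * A n z' := by
    intro n
    induction n with
    | zero =>
      intro _
      rw [hBellman 0 (by omega) z d, hBellman 0 (by omega) z d₀]
      have hs : ∑ z' : Z, V 1 z' * (f 0 z d z' - f 0 z d₀ z')
          = (∑ z' : Z, V 1 z' * f 0 z d z') - ∑ z' : Z, V 1 z' * f 0 z d₀ z' := by
        rw [← Finset.sum_sub_distrib]
        exact Finset.sum_congr rfl fun _ _ => mul_sub _ _ _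
      simp only [hA, kappaSW, Finset.range_zero, Finset.sum_empty, add_zero, pow_one, hs]
      ring
    | succ n ih =>
      intro hn1
      rw [ih (by omega), step n hn1, Finset.sum_range_succ]
      ring
  rw [main ρ le_rfl]
  have hzero : ∀ z'' : Z, A ρ z'' = 0 := by
    intro z''
    obtain ⟨m, rfl⟩ : ∃ m, ρ = m + 1 := ⟨ρ - 1, by omega⟩
    rw [hκ m z'']
    have := hdep z z'' d
    simp only [Nat.add_sub_cancel] at this
    rw [← this]
    exact Finset.sum_congr rfl fun _ _ => mul_comm _ _
  simp [hzero]
  rfl
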